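/- Let V satisfy the basic assumptions with decay exponent a > 1. Then there exists a constant C > 0 such that for every ε ∈ ℓ²(ℕ) with −1/2 ≤ ε(i) ≤ 0 for all i ≥ 1, the quadratic-type part of the limit energy satisfies Q_∞(ε) := Σ_{k=1}^{∞} Σ_{j=0}^{∞} φ_k(Σ_{l=j+1}^{k+j} ε(l)) ≤ C ‖ε‖²_{ℓ²(ℕ)}. -/

import Mathlib

open Filter Set MeasureTheory
open scoped Classical ENNReal NNReal BigOperators

noncomputable section

/-- `lam V x` is λ(x) := inf_{(0,x)} V''. -/
def lam (V : ℝ → ℝ) (x : ℝ) : ℝ :=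
  sInf (deriv (deriv V) '' Set.Ioo 0 x)

/-- The basic assumptions (Reg), (Sing), (Cvx), (Dec) on the interaction
potential `V`, with decay exponent `a`. -/
structure BasicAssumptions (V : ℝ → ℝ) (a : ℝ) : Prop where
  nonneg : ∀ x : ℝ, 0 ≤ V x
  even : ∀ x : ℝ, V (-x) = V x
  pos : ∀ x : ℝ, x ≠ 0 → 0 < V x
  smooth : ContDiffOn ℝ 2 V {(0 : ℝ)}ᶜ
  sing : Filter.Tendsto V (nhdsWithin 0 {(0 : ℝ)}ᶜ) Filter.atTop
  cvx : ∀ x : ℝ, 0 < x → 0 < lam V x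
  decV : Filter.Tendsto V Filter.atTop (nhds 0)
  decV' : Filter.Tendsto (deriv V) Filter.atTop (nhds 0)
  one_lt_a : 1 < a
  decV'' : ∀ δ : ℝ, 0 < δ → ∃ c : ℝ, 0 < c ∧
    ∀ x : ℝ, δ ≤ |x| → deriv (deriv V) x ≤ c * |x| ^ (-(a + 2))

/-- The configuration space 𝒟_n. -/
def Dn (n : ℕ) : Set (Fin (n + 1) → ℝ) :=
  {x | x 0 = 0 ∧ x (Fin.last n) = 1 ∧ Monotone x}

/-- The energy E_n(x) := (1/n) Σ_{k=1}^{n} Σ_{j=0}^{n−k} V(n[x(j+k) − x(j)]),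
valued in [0,∞], with the convention V(0) = +∞ from (Sing).  The double sum is
written as a sum over all pairs q < p. -/
def En (V : ℝ → ℝ) (n : ℕ) (x : Fin (n + 1) → ℝ) : ℝ≥0∞ :=
  ENNReal.ofReal (1 / (n : ℝ)) *
    ∑ p : Fin (n + 1), ∑ q : Fin (n + 1),
      if (q : ℕ) < (p : ℕ) then
        (if x p = x q then ⊤ else ENNReal.ofReal (V ((n : ℝ) * (x p - x q))))
      else 0

/-- The first-order Taylor remainder φ_k(y) := V(k+y) − V(k) − V'(k)y. -/
def phi (V : ℝ → ℝ) (k y : ℝ) : ℝ :=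
  V (k + y) - V k - deriv V k * y

/-- The lower-bound function Φ_k. -/
def PhiLB (V : ℝ → ℝ) (k y : ℝ) : ℝ :=
  if y ≤ 1 then 1 / 2 * lam V (k + 1) * y ^ 2 else lam V (k + 1) * (y - 1 / 2)

/-- σ^n(i) := Σ_{k=i+1}^{n−i} min(k−i, n−i+1−k)|V'(k)| for 1 ≤ i ≤ ⌊n/2⌋,
and 0 otherwise. -/
def sigman (V : ℝ → ℝ) (n i : ℕ) : ℝ :=
  if 1 ≤ i ∧ i ≤ n / 2 then
    ∑ k ∈ Finset.Icc (i + 1) (n - i),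
      ((min (k - i) (n + 1 - i - k) : ℕ) : ℝ) * |deriv V (k : ℝ)|
  else 0

/-- σ^∞(i) := Σ_{k=i+1}^∞ (k−i)|V'(k)| for i ≥ 1 (index 0 is inert). -/
def sigmaInf (V : ℝ → ℝ) (i : ℕ) : ℝ :=
  if i = 0 then 0
  else ∑' m : ℕ, ((m + 1 : ℕ) : ℝ) * |deriv V ((i + 1 + m : ℕ) : ℝ)|

/-- Dom E_n^1 := {ε ∈ ℝ^n : −1 ≤ ε(i) ≤ n, Σ_{i=1}^n ε(i) = 0}, regarded as a
subset of ℓ²(ℕ) by extension by zero. -/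
def DomEn1 (n : ℕ) : Set (ℕ → ℝ) :=
  {ε | (∀ i, 1 ≤ i → i ≤ n → -1 ≤ ε i ∧ ε i ≤ (n : ℝ)) ∧
    (∀ i, i = 0 ∨ n < i → ε i = 0) ∧
    (∑ i ∈ Finset.Icc 1 n, ε i) = 0}

/-- The renormalised energy
E_n^1(ε) := Σ_{k=1}^{n} Σ_{j=0}^{n−k} [V(k + Σ_{l=j+1}^{j+k} ε(l)) − V(k)]. -/
def En1 (V : ℝ → ℝ) (n : ℕ) (ε : ℕ → ℝ) : ℝ :=
  ∑ k ∈ Finset.Icc 1 n, ∑ j ∈ Finset.range (n - k + 1),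
    (V ((k : ℝ) + ∑ l ∈ Finset.Icc (j + 1) (j + k), ε l) - V (k : ℝ))

/-- The quadratic-type part Q_n(ε) := Σ_{k=1}^{n} Σ_{j=0}^{n−k} φ_k(Σ_{l=j+1}^{k+j} ε(l)). -/
def Qn (V : ℝ → ℝ) (n : ℕ) (ε : ℕ → ℝ) : ℝ :=
  ∑ k ∈ Finset.Icc 1 n, ∑ j ∈ Finset.range (n - k + 1),
    phi V (k : ℝ) (∑ l ∈ Finset.Icc (j + 1) (j + k), ε l)

/-- The half truncation ε^{n,1/2}(i) := ε(i) for 1 ≤ i ≤ ⌈n/2⌉ and 0 otherwise. -/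
def half (n : ℕ) (ε : ℕ → ℝ) (i : ℕ) : ℝ :=
  if 1 ≤ i ∧ i ≤ (n + 1) / 2 then ε i else 0

/-- The reversal ε⃖(i) := ε(n+1−i) for 1 ≤ i ≤ n, extended by zero. -/
def rev (n : ℕ) (ε : ℕ → ℝ) (i : ℕ) : ℝ :=
  if 1 ≤ i ∧ i ≤ n then ε (n + 1 - i) else 0

/-- Dom E_∞^l := {ε ∈ ℓ²(ℕ) : ε(i) ≥ −1 for all i ≥ 1} (index 0 is inert). -/
def DomEinfl : Set (ℕ → ℝ) :=
  {ε | Summable (fun i => ε i ^ 2) ∧ ε 0 = 0 ∧ ∀ i, 1 ≤ i → -1 ≤ ε i}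

/-- Q_∞(ε) := Σ_{k=1}^∞ Σ_{j=0}^∞ φ_k(Σ_{l=j+1}^{k+j} ε(l)), valued in [0,∞]
(the summands are nonnegative). -/
def Qinf (V : ℝ → ℝ) (ε : ℕ → ℝ) : ℝ≥0∞ :=
  ∑' (k : ℕ) (j : ℕ),
    ENNReal.ofReal (phi V ((k : ℝ) + 1) (∑ l ∈ Finset.Icc (j + 1) (j + k + 1), ε l))

/-- The linear term (σ^∞, ε)_{ℓ²(ℕ)} as an extended real (difference of the
sums of the positive and negative parts). -/
def linPart (V : ℝ → ℝ) (ε : ℕ → ℝ) : EReal :=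
  ((∑' i : ℕ, ENNReal.ofReal (sigmaInf V i * ε i) : ℝ≥0∞) : EReal) -
    ((∑' i : ℕ, ENNReal.ofReal (-(sigmaInf V i * ε i)) : ℝ≥0∞) : EReal)

/-- The limit boundary-layer energy E_∞^l(ε) := Q_∞(ε) + (σ^∞, ε), valued in
the extended reals. -/
def Einfl (V : ℝ → ℝ) (ε : ℕ → ℝ) : EReal :=
  (Qinf V ε : EReal) + linPart V ε

end

section
variable {V : ℝ → ℝ}

private lemma phi_le_aux (hsm : ContDiffOn ℝ 2 V {(0 : ℝ)}ᶜ)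
    {a c : ℝ} (hc : 0 ≤ c) (ha : 0 ≤ a)
    (hcb : ∀ x : ℝ, 1/2 ≤ |x| → deriv (deriv V) x ≤ c * |x| ^ (-(a+2)))
    {m y : ℝ} (hm : 1 ≤ m) (hy0 : y ≤ 0) (hym : -(m/2) ≤ y) :
    (V (m + y) - V m - deriv V m * y) ≤ (c * 2 ^ (a+2)) * m ^ (-(a+2)) * y ^ 2 := by
  have hm0 : (0:ℝ) < m := by linarith
  rcases eq_or_lt_of_le hy0 with rfl | hy
  · simp
  -- differentiability facts
  have hopen : IsOpen ({(0:ℝ)}ᶜ) := isOpen_compl_singleton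
  have hVd : ∀ x : ℝ, x ≠ 0 → DifferentiableAt ℝ V x := fun x hx =>
    ((hsm.differentiableOn (by norm_num)).differentiableAt (hopen.mem_nhds hx))
  have hV'c : ContDiffOn ℝ 1 (deriv V) {(0:ℝ)}ᶜ := by
    have := hsm.deriv_of_isOpen hopen (n := 2) (m := 1) (by norm_num)
    exact this
  have hV'd : ∀ x : ℝ, x ≠ 0 → DifferentiableAt ℝ (deriv V) x := fun x hx =>
    ((hV'c.differentiableOn (by norm_num)).differentiableAt (hopen.mem_nhds hx))
  have hA : (0:ℝ) < m + y := by linarith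
  have hAm : m + y < m := by linarith
  have hsub : Icc (m + y) m ⊆ {(0:ℝ)}ᶜ := fun x hx =>
    Set.mem_compl_singleton_iff.mpr (ne_of_gt (lt_of_lt_of_le hA hx.1))
  -- first MVT: on V over [m+y, m]
  obtain ⟨ξ, hξ, hξeq⟩ := exists_deriv_eq_slope V hAm
    (fun x hx => (hVd x (fun h0 => (hsub hx h0))).continuousAt.continuousWithinAt)
    (fun x hx => (hVd x (fun h0 => (hsub (Ioo_subset_Icc_self hx) h0))).differentiableWithinAt)
  have hny : (0:ℝ) < -y := by linarith
  have hV1 : V m - V (m + y) = deriv V ξ * (-y) := by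
    rw [show m - (m + y) = -y by ring] at hξeq
    field_simp at hξeq
    rw [hξeq, neg_mul_neg, div_mul_cancel₀ _ hy.ne]
  -- second MVT: on deriv V over [ξ, m]
  have hξ0 : (0:ℝ) < ξ := lt_trans hA hξ.1
  have hsub2 : Icc ξ m ⊆ {(0:ℝ)}ᶜ := fun x hx =>
    Set.mem_compl_singleton_iff.mpr (ne_of_gt (lt_of_lt_of_le hξ0 hx.1))
  obtain ⟨η, hη, hηeq⟩ := exists_deriv_eq_slope (deriv V) hξ.2
    (fun x hx => (hV'd x (fun h0 => hsub2 hx h0)).continuousAt.continuousWithinAt)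
    (fun x hx => (hV'd x (fun h0 => hsub2 (Ioo_subset_Icc_self hx) h0)).differentiableWithinAt)
  have hmξ : (0:ℝ) < m - ξ := by linarith [hξ.2]
  have hV2 : deriv V ξ - deriv V m = -(deriv (deriv V) η * (m - ξ)) := by
    field_simp at hηeq
    linarith [hηeq]
  have hphi : V (m + y) - V m - deriv V m * y = deriv (deriv V) η * ((m - ξ) * (-y)) := by
    have : V (m + y) - V m = deriv V ξ * y := by linarith [hV1]
    rw [this]
    have : (deriv V ξ - deriv V m) * y = deriv (deriv V) η * ((m - ξ) * (-y)) := by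
      rw [hV2]; ring
    linarith [this]
  have hη0 : m / 2 ≤ η := by
    have : m + y ≤ η := le_of_lt (lt_trans hξ.1 hη.1)
    linarith
  have hηhalf : (1:ℝ)/2 ≤ |η| := by
    rw [abs_of_pos (by linarith)]
    linarith
  have hbd : deriv (deriv V) η ≤ c * (m/2) ^ (-(a+2)) := by
    refine le_trans (hcb η hηhalf) ?_
    refine mul_le_mul_of_nonneg_left ?_ hc
    refine Real.rpow_le_rpow_of_nonpos (by linarith) ?_ (by linarith)
    · rw [abs_of_pos (by linarith)]; linarith
  have hpow : c * (m/2) ^ (-(a+2)) = c * 2 ^ (a+2) * m ^ (-(a+2)) := by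
    rw [div_eq_mul_inv, Real.mul_rpow hm0.le (by norm_num), Real.inv_rpow (by norm_num),
      ← Real.rpow_neg (by norm_num), neg_neg]
    ring
  rw [hphi]
  calc deriv (deriv V) η * ((m - ξ) * -y) ≤ c * (m/2) ^ (-(a+2)) * ((m - ξ) * -y) := by
        refine mul_le_mul_of_nonneg_right hbd ?_
        positivity
    _ ≤ c * (m/2) ^ (-(a+2)) * (-y * -y) := by
        refine mul_le_mul_of_nonneg_left ?_ (by positivity)
        refine mul_le_mul_of_nonneg_right ?_ hny.le
        linarith [hξ.1]
    _ = c * (m/2) ^ (-(a+2)) * y ^ 2 := by ring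
    _ = c * 2 ^ (a+2) * m ^ (-(a+2)) * y ^ 2 := by rw [hpow]
end



/-- quadratic upper bound for Q_∞ on sequences with
−1/2 ≤ ε(i) ≤ 0: Q_∞(ε) ≤ C‖ε‖²_{ℓ²(ℕ)}. -/
theorem statement17 (V : ℝ → ℝ) (a : ℝ) (h : BasicAssumptions V a) :
    ∃ C : ℝ, 0 < C ∧ ∀ ε : ℕ → ℝ, Summable (fun i => ε i ^ 2) → ε 0 = 0 →
      (∀ i : ℕ, 1 ≤ i → -(1 / 2) ≤ ε i ∧ ε i ≤ 0) →
      Qinf V ε ≤ ENNReal.ofReal (C * ∑' i : ℕ, ε i ^ 2) := by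
  obtain ⟨c, hc, hcb⟩ := h.decV'' (1/2) (by norm_num)
  have ha : 1 < a := h.one_lt_a
  have ha0 : (0:ℝ) ≤ a := by linarith
  have hsum : Summable (fun k : ℕ => ((k:ℝ)+1) ^ (-a)) := by
    have h1 := (Real.summable_nat_rpow (p := -a)).mpr (by linarith)
    have h2 := h1.comp_injective (add_left_injective 1)
    refine h2.congr fun k => ?_
    simp [Function.comp]
  set Z := ∑' k : ℕ, ((k:ℝ)+1) ^ (-a) with hZdef
  have hZpos : 0 < Z := Summable.tsum_pos hsum (fun k => by positivity) 0 (by positivity)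
  set c2 := c * 2 ^ (a+2) with hc2def
  have hc2 : 0 < c2 := by positivity
  refine ⟨c2 * Z, mul_pos hc2 hZpos, ?_⟩
  intro ε hεsq hε0 hεb
  set g : ℕ → ℝ≥0∞ := fun l => ENNReal.ofReal (ε l ^ 2) with hgdef
  have hTE : ∑' l, g l = ENNReal.ofReal (∑' i, ε i ^ 2) :=
    (ENNReal.ofReal_tsum_of_nonneg (fun i => sq_nonneg _) hεsq).symm
  have key : ∀ k j : ℕ,
      ENNReal.ofReal (phi V ((k:ℝ)+1) (∑ l ∈ Finset.Icc (j+1) (j+k+1), ε l)) ≤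
      ENNReal.ofReal (c2 * ((k:ℝ)+1) ^ (-(a+2)) * ((k:ℝ)+1)) *
        ∑ l ∈ Finset.Icc (j+1) (j+k+1), g l := by
    intro k j
    set S := ∑ l ∈ Finset.Icc (j+1) (j+k+1), ε l with hSdef
    have hcard : (Finset.Icc (j+1) (j+k+1)).card = k+1 := by
      rw [Nat.card_Icc]; omega
    have hmem : ∀ l ∈ Finset.Icc (j+1) (j+k+1), 1 ≤ l := by
      intro l hl; rw [Finset.mem_Icc] at hl; omega
    have hS0 : S ≤ 0 := Finset.sum_nonpos fun l hl => (hεb l (hmem l hl)).2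
    have hSlb : -(((k:ℝ)+1)/2) ≤ S := by
      have h3 := Finset.sum_le_sum (f := fun _ : ℕ => -(1/2 : ℝ)) (g := ε)
        (s := Finset.Icc (j+1) (j+k+1)) (fun l hl => (hεb l (hmem l hl)).1)
      rw [Finset.sum_const, hcard, nsmul_eq_mul] at h3
      rw [← hSdef] at h3
      push_cast at h3 ⊢
      linarith
    have hk1 : (1:ℝ) ≤ (k:ℝ)+1 := by linarith [(Nat.cast_nonneg k : (0:ℝ) ≤ k)]
    have hphi := phi_le_aux h.smooth hc.le ha0 hcb hk1 hS0 hSlb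
    have hCS : S ^ 2 ≤ ((k:ℝ)+1) * ∑ l ∈ Finset.Icc (j+1) (j+k+1), ε l ^ 2 := by
      have h4 := sq_sum_le_card_mul_sum_sq (s := Finset.Icc (j+1) (j+k+1)) (f := ε)
      rw [hcard, ← hSdef] at h4
      push_cast at h4
      exact h4
    calc ENNReal.ofReal (phi V ((k:ℝ)+1) S)
        ≤ ENNReal.ofReal ((c2 * ((k:ℝ)+1)^(-(a+2)) * ((k:ℝ)+1)) *
            ∑ l ∈ Finset.Icc (j+1) (j+k+1), ε l ^ 2) := by
          refine ENNReal.ofReal_le_ofReal ?_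
          rw [phi]
          refine le_trans hphi ?_
          have hnn : (0:ℝ) ≤ c2 * ((k:ℝ)+1)^(-(a+2)) := by positivity
          calc c2 * ((k:ℝ)+1)^(-(a+2)) * S ^ 2
              ≤ c2 * ((k:ℝ)+1)^(-(a+2)) * (((k:ℝ)+1) * ∑ l ∈ Finset.Icc (j+1) (j+k+1), ε l ^ 2) :=
                mul_le_mul_of_nonneg_left hCS hnn
            _ = (c2 * ((k:ℝ)+1)^(-(a+2)) * ((k:ℝ)+1)) * ∑ l ∈ Finset.Icc (j+1) (j+k+1), ε l ^ 2 := by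
                ring
      _ = ENNReal.ofReal (c2 * ((k:ℝ)+1)^(-(a+2)) * ((k:ℝ)+1)) *
            ENNReal.ofReal (∑ l ∈ Finset.Icc (j+1) (j+k+1), ε l ^ 2) := by
          rw [ENNReal.ofReal_mul (by positivity)]
      _ = ENNReal.ofReal (c2 * ((k:ℝ)+1)^(-(a+2)) * ((k:ℝ)+1)) *
            ∑ l ∈ Finset.Icc (j+1) (j+k+1), g l := by
          rw [ENNReal.ofReal_sum_of_nonneg (fun i _ => sq_nonneg _)]
  have hcount : ∀ k : ℕ, (∑' j : ℕ, ∑ l ∈ Finset.Icc (j+1) (j+k+1), g l)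
      ≤ ((k:ℝ≥0∞)+1) * ∑' l, g l := by
    intro k
    have hrw : ∀ j : ℕ, ∑ l ∈ Finset.Icc (j+1) (j+k+1), g l
        = ∑ i ∈ Finset.range (k+1), g (j+1+i) := by
      intro j
      rw [← Finset.Ico_add_one_right_eq_Icc, Finset.sum_Ico_eq_sum_range]
      have : j + 1 + 1 + k - (j + 1) = k + 1 := by omega
      simp only [show j + k + 1 + 1 - (j + 1) = k + 1 by omega]
    calc (∑' j : ℕ, ∑ l ∈ Finset.Icc (j+1) (j+k+1), g l)
        = ∑' j : ℕ, ∑ i ∈ Finset.range (k+1), g (j+1+i) := by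
          exact tsum_congr hrw
      _ = ∑ i ∈ Finset.range (k+1), ∑' j : ℕ, g (j+1+i) :=
          Summable.tsum_finsetSum (fun i _ => ENNReal.summable)
      _ ≤ ∑ i ∈ Finset.range (k+1), ∑' l, g l :=
          Finset.sum_le_sum fun i _ =>
            ENNReal.tsum_comp_le_tsum_of_injective
              (f := fun j : ℕ => j+1+i) (fun j1 j2 hj => by simpa using hj) g
      _ = ((k:ℝ≥0∞)+1) * ∑' l, g l := by
          rw [Finset.sum_const, Finset.card_range, nsmul_eq_mul]
          push_cast
          ring
  have hmerge : ∀ k : ℕ, ENNReal.ofReal (c2 * ((k:ℝ)+1)^(-(a+2)) * ((k:ℝ)+1)) * ((k:ℝ≥0∞)+1)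
      = ENNReal.ofReal (c2 * ((k:ℝ)+1)^(-a)) := by
    intro k
    have hx : (0:ℝ) < (k:ℝ)+1 := by positivity
    have hcast : ((k:ℝ≥0∞)+1) = ENNReal.ofReal ((k:ℝ)+1) := by
      rw [ENNReal.ofReal_add (by positivity) zero_le_one, ENNReal.ofReal_natCast,
        ENNReal.ofReal_one]
    rw [hcast, ← ENNReal.ofReal_mul (by positivity)]
    congr 1
    have hsplit : ((k:ℝ)+1)^(-a) = ((k:ℝ)+1)^(-(a+2)) * ((k:ℝ)+1)^(2:ℝ) := by
      rw [← Real.rpow_add hx]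
      ring_nf
    rw [hsplit, Real.rpow_two]
    ring
  have step1 : ∀ k : ℕ,
      (∑' j : ℕ, ENNReal.ofReal (phi V ((k:ℝ)+1) (∑ l ∈ Finset.Icc (j+1) (j+k+1), ε l)))
      ≤ ENNReal.ofReal (c2 * ((k:ℝ)+1)^(-a)) * ∑' l, g l := by
    intro k
    calc (∑' j : ℕ, ENNReal.ofReal (phi V ((k:ℝ)+1) (∑ l ∈ Finset.Icc (j+1) (j+k+1), ε l)))
        ≤ ∑' j : ℕ, ENNReal.ofReal (c2 * ((k:ℝ)+1) ^ (-(a+2)) * ((k:ℝ)+1)) *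
            ∑ l ∈ Finset.Icc (j+1) (j+k+1), g l := ENNReal.tsum_le_tsum (key k)
      _ = ENNReal.ofReal (c2 * ((k:ℝ)+1) ^ (-(a+2)) * ((k:ℝ)+1)) *
            ∑' j : ℕ, ∑ l ∈ Finset.Icc (j+1) (j+k+1), g l := ENNReal.tsum_mul_left
      _ ≤ ENNReal.ofReal (c2 * ((k:ℝ)+1) ^ (-(a+2)) * ((k:ℝ)+1)) *
            (((k:ℝ≥0∞)+1) * ∑' l, g l) := mul_le_mul_right (hcount k) _
      _ = (ENNReal.ofReal (c2 * ((k:ℝ)+1) ^ (-(a+2)) * ((k:ℝ)+1)) * ((k:ℝ≥0∞)+1)) *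
            ∑' l, g l := by ring
      _ = ENNReal.ofReal (c2 * ((k:ℝ)+1)^(-a)) * ∑' l, g l := by rw [hmerge]
  calc Qinf V ε
      ≤ ∑' k : ℕ, ENNReal.ofReal (c2 * ((k:ℝ)+1)^(-a)) * ∑' l, g l := by
        rw [Qinf]
        exact ENNReal.tsum_le_tsum step1
    _ = (∑' k : ℕ, ENNReal.ofReal (c2 * ((k:ℝ)+1)^(-a))) * ∑' l, g l :=
        ENNReal.tsum_mul_right
    _ = ENNReal.ofReal (∑' k : ℕ, c2 * ((k:ℝ)+1)^(-a)) * ENNReal.ofReal (∑' i, ε i ^ 2) := by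
        rw [← ENNReal.ofReal_tsum_of_nonneg (fun k => by positivity) (hsum.mul_left c2), hTE]
    _ = ENNReal.ofReal (c2 * Z) * ENNReal.ofReal (∑' i, ε i ^ 2) := by
        rw [tsum_mul_left]
    _ = ENNReal.ofReal (c2 * Z * ∑' i, ε i ^ 2) := by
        rw [← ENNReal.ofReal_mul (by positivity)]
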